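/- Consider the coupled projected TTSA recursions x_{t+1} = Π_X[x_t + α(A_ff x_t + A_fs y_t − b1 + ε_t)], y_{t+1} = Π_Y[y_t + β(A_sf x_t + A_ss y_t − b2 + ψ_t)] with constant step sizes α, β > 0, x_0 ∈ X, y_0 ∈ Y, on a probability space with filtration (F_t): (x_t, y_t) is F_t-measurable, ε_t and ψ_t are F_{t+1}-measurable with E[ε_t | F_t] = 0, E[ψ_t | F_t] = 0, E[‖ε_t‖² | F_t] ≤ C_ε, E[‖ψ_t‖² | F_t] ≤ C_ψ almost surely. Assume U_Xᵀ A_ff U_X is invertible with c1 := U_X (U_Xᵀ A_ff U_X)^{-1} U_Xᵀ and m_x := σ_min(U_Xᵀ A_ff U_X) > 0, that U_Yᵀ (A_ss − A_sf c1 A_fs) U_Y is invertible with m_y := σ_min(U_Yᵀ (A_ss − A_sf c1 A_fs) U_Y) > 0, and that the iterates are uniformly bounded in L²: sup_t E[‖x_t‖² + ‖y_t‖²] ≤ B < ∞. Let (x_p*, y_p*) ∈ X × Y be the constrained solution. Then there is a constant D ≥ 0, depending only on the matrices, subspaces, step sizes, and B, such that for all T ≥ 1: E[‖ȳ_T − y_p*‖²]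 ≤ (4 C_ψ / m_y² + 4 ‖A_sf‖₂² C_ε / (m_y² m_x²)) / T + D / T², where ȳ_T := (1/T)Σ_{t=0}^{T−1} y_t. -/

import Mathlib

open Matrix MeasureTheory Finset
open scoped BigOperators

noncomputable section
namespace TTSA

abbrev E (n : ℕ) : Type := EuclideanSpace ℝ (Fin n)

def mv {k l : ℕ} (M : Matrix (Fin k) (Fin l) ℝ) (x : E l) : E k :=
  Matrix.toEuclideanLin M x

def specNorm {k l : ℕ} (M : Matrix (Fin k) (Fin l) ℝ) : ℝ :=
  ‖LinearMap.toContinuousLinearMap (Matrix.toEuclideanLin M)‖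

def sigmaMin {k : ℕ} (M : Matrix (Fin k) (Fin k) ℝ) : ℝ :=
  sInf ((fun v : E k => ‖mv M v‖) '' {v | ‖v‖ = 1})

def resolvent {k l : ℕ} (U : Matrix (Fin k) (Fin l) ℝ) (A : Matrix (Fin k) (Fin k) ℝ) :
    Matrix (Fin k) (Fin k) ℝ :=
  U * (Uᵀ * A * U)⁻¹ * Uᵀ

open scoped RealInnerProductSpace

variable {k l p : ℕ}

lemma mv_add (M : Matrix (Fin k) (Fin l) ℝ) (a b : E l) :
    mv M (a + b) = mv M a + mv M b := map_add _ _ _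

lemma mv_sub (M : Matrix (Fin k) (Fin l) ℝ) (a b : E l) :
    mv M (a - b) = mv M a - mv M b := map_sub _ _ _

lemma mv_smul (M : Matrix (Fin k) (Fin l) ℝ) (c : ℝ) (a : E l) :
    mv M (c • a) = c • mv M a := map_smul _ _ _

lemma mv_zero (M : Matrix (Fin k) (Fin l) ℝ) : mv M 0 = 0 := map_zero _

lemma mv_sum {ι : Type*} (M : Matrix (Fin k) (Fin l) ℝ) (s : Finset ι) (f : ι → E l) :
    mv M (∑ i ∈ s, f i) = ∑ i ∈ s, mv M (f i) := map_sum _ _ _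

lemma mv_mv (A : Matrix (Fin k) (Fin l) ℝ) (B : Matrix (Fin l) (Fin p) ℝ) (v : E p) :
    mv A (mv B v) = mv (A * B) v := by
  simp [mv, Matrix.toEuclideanLin_apply, Matrix.mulVec_mulVec]

lemma mv_matsub (A B : Matrix (Fin k) (Fin l) ℝ) (v : E l) :
    mv (A - B) v = mv A v - mv B v := by
  simp [mv, map_sub, LinearMap.sub_apply]

lemma inner_mv (M : Matrix (Fin k) (Fin l) ℝ) (u : E l) (w : E k) :
    ⟪mv M u, w⟫ = ⟪u, mv Mᵀ w⟫ := by
  have hMt : (Mᵀ : Matrix (Fin l) (Fin k) ℝ) = Mᴴ := by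
    ext i j; simp [Matrix.conjTranspose_apply]
  rw [show mv Mᵀ w = (LinearMap.adjoint (Matrix.toEuclideanLin M)) w by
    rw [mv, hMt, Matrix.toEuclideanLin_conjTranspose_eq_adjoint]]
  rw [LinearMap.adjoint_inner_right]
  rfl

lemma norm_mv_orth {U : Matrix (Fin k) (Fin l) ℝ} (hU : Uᵀ * U = 1) (v : E l) :
    ‖mv U v‖ = ‖v‖ := by
  have h : ⟪mv U v, mv U v⟫ = ⟪v, v⟫ := by
    rw [inner_mv, mv_mv, hU]
    simp [mv, Matrix.toEuclideanLin_apply]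
  have := congrArg Real.sqrt h
  rwa [real_inner_self_eq_norm_sq, real_inner_self_eq_norm_sq,
    Real.sqrt_sq (norm_nonneg _), Real.sqrt_sq (norm_nonneg _)] at this

lemma norm_mvT_le {U : Matrix (Fin k) (Fin l) ℝ} (hU : Uᵀ * U = 1) (w : E k) :
    ‖mv Uᵀ w‖ ≤ ‖w‖ := by
  have h : ⟪mv Uᵀ w, mv Uᵀ w⟫ = ⟪w, mv U (mv Uᵀ w)⟫ := by
    rw [← inner_mv U (mv Uᵀ w) w, real_inner_comm]
  have h2 : ‖mv Uᵀ w‖ ^ 2 ≤ ‖w‖ * ‖mv Uᵀ w‖ := by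
    rw [← real_inner_self_eq_norm_sq, h]
    calc ⟪w, mv U (mv Uᵀ w)⟫ ≤ ‖w‖ * ‖mv U (mv Uᵀ w)‖ := real_inner_le_norm _ _
    _ = ‖w‖ * ‖mv Uᵀ w‖ := by rw [norm_mv_orth hU]
  rcases eq_or_lt_of_le (norm_nonneg (mv Uᵀ w)) with h0 | h0
  · rw [← h0]; exact norm_nonneg _
  · nlinarith

lemma norm_mv_le (M : Matrix (Fin k) (Fin l) ℝ) (v : E l) :
    ‖mv M v‖ ≤ specNorm M * ‖v‖ := by
  have := (LinearMap.toContinuousLinearMap (Matrix.toEuclideanLin M)).le_opNorm v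
  simpa [mv, specNorm] using this

lemma specNorm_nonneg (M : Matrix (Fin k) (Fin l) ℝ) : 0 ≤ specNorm M := norm_nonneg _

lemma sigmaMin_mul_le (M : Matrix (Fin k) (Fin k) ℝ) (v : E k) :
    sigmaMin M * ‖v‖ ≤ ‖mv M v‖ := by
  rcases eq_or_ne v 0 with rfl | hv
  · simp [mv_zero]
  · have hvn : (0:ℝ) < ‖v‖ := norm_pos_iff.2 hv
    set w : E k := ‖v‖⁻¹ • v with hw
    have hwn : ‖w‖ = 1 := by
      rw [hw, norm_smul, norm_inv, norm_norm, inv_mul_cancel₀ hvn.ne']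
    have hmem : ‖mv M w‖ ∈ (fun v : E k => ‖mv M v‖) '' {v | ‖v‖ = 1} :=
      ⟨w, hwn, rfl⟩
    have hbdd : BddBelow ((fun v : E k => ‖mv M v‖) '' {v | ‖v‖ = 1}) :=
      ⟨0, fun z hz => by rcases hz with ⟨u, _, rfl⟩; exact norm_nonneg _⟩
    have h1 : sigmaMin M ≤ ‖mv M w‖ := csInf_le hbdd hmem
    have h2 : ‖mv M w‖ = ‖v‖⁻¹ * ‖mv M v‖ := by
      rw [hw, mv_smul, norm_smul, norm_inv, norm_norm]
    rw [h2] at h1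
    calc sigmaMin M * ‖v‖ ≤ (‖v‖⁻¹ * ‖mv M v‖) * ‖v‖ :=
          mul_le_mul_of_nonneg_right h1 hvn.le
      _ = ‖mv M v‖ := by field_simp

lemma mv_inv_mv {M : Matrix (Fin k) (Fin k) ℝ} (hM : IsUnit M) (v : E k) :
    mv M⁻¹ (mv M v) = v := by
  rw [mv_mv, Matrix.nonsing_inv_mul M ((Matrix.isUnit_iff_isUnit_det M).1 hM)]
  simp [mv, Matrix.toEuclideanLin_apply]

lemma norm_mv_inv_le {M : Matrix (Fin k) (Fin k) ℝ} (hM : IsUnit M)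
    (hσ : 0 < sigmaMin M) (w : E k) :
    ‖mv M⁻¹ w‖ ≤ (sigmaMin M)⁻¹ * ‖w‖ := by
  have h1 : sigmaMin M * ‖mv M⁻¹ w‖ ≤ ‖mv M (mv M⁻¹ w)‖ := sigmaMin_mul_le _ _
  have h2 : mv M (mv M⁻¹ w) = w := by
    rw [mv_mv, Matrix.mul_nonsing_inv M ((Matrix.isUnit_iff_isUnit_det M).1 hM)]
    simp [mv, Matrix.toEuclideanLin_apply]
  rw [h2] at h1
  rw [← div_eq_inv_mul, le_div_iff₀ hσ, mul_comm]
  exact h1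


section Prob
variable {Ω : Type*} {m0 : MeasurableSpace Ω} {μ : Measure Ω}

open scoped RealInnerProductSpace

lemma integrable_inner_of_L2 [IsFiniteMeasure μ] {k : ℕ} {f g : Ω → E k}
    (hf : MemLp f 2 μ) (hg : MemLp g 2 μ) :
    Integrable (fun ω => ⟪f ω, g ω⟫) μ := by
  have hfi := hf.norm.integrable_sq
  have hgi := hg.norm.integrable_sq
  refine Integrable.mono' (hfi.add hgi) (AEStronglyMeasurable.inner hf.1 hg.1) ?_
  filter_upwards with ω
  have h1 : ‖⟪f ω, g ω⟫‖ ≤ ‖f ω‖ * ‖g ω‖ := norm_inner_le_norm _ _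
  simp only [Pi.add_apply]
  nlinarith [sq_nonneg (‖f ω‖ - ‖g ω‖), norm_nonneg (f ω), norm_nonneg (g ω)]

lemma integrable_mul_of_L2 [IsFiniteMeasure μ] {f g : Ω → ℝ}
    (hf : MemLp f 2 μ) (hg : MemLp g 2 μ) :
    Integrable (fun ω => f ω * g ω) μ := by
  have hfi := hf.integrable_sq
  have hgi := hg.integrable_sq
  refine Integrable.mono' (hfi.add hgi) (hf.1.mul hg.1) ?_
  filter_upwards with ω
  have : |f ω * g ω| ≤ f ω ^ 2 + g ω ^ 2 := by
    nlinarith [sq_nonneg (|f ω| - |g ω|), abs_nonneg (f ω), abs_nonneg (g ω),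
      sq_abs (f ω), sq_abs (g ω), abs_mul (f ω) (g ω), abs_nonneg (f ω * g ω)]
  simp only [Pi.add_apply, Real.norm_eq_abs]
  exact this

lemma integral_inner_zero [IsProbabilityMeasure μ] {k : ℕ} {F : MeasurableSpace Ω} (hF : F ≤ m0)
    {f g : Ω → E k} (hfm : StronglyMeasurable[F] f)
    (hf : MemLp f 2 μ) (hg : MemLp g 2 μ) (hcond : μ[g|F] =ᵐ[μ] 0) :
    ∫ ω, ⟪f ω, g ω⟫ ∂μ = 0 := by
  haveI : SigmaFinite (μ.trim hF) := inferInstance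
  letI : MeasurableSpace Ω := m0
  have hginteg : Integrable g μ := hg.integrable one_le_two
  have key : ∀ i : Fin k, ∫ ω, f ω i * g ω i ∂μ = 0 := by
    intro i
    have hfi2 : MemLp (fun ω => f ω i) 2 μ := by
      simpa [Function.comp_def] using (EuclideanSpace.proj i : E k →L[ℝ] ℝ).comp_memLp' hf
    have hgi2 : MemLp (fun ω => g ω i) 2 μ := by
      simpa [Function.comp_def] using (EuclideanSpace.proj i : E k →L[ℝ] ℝ).comp_memLp' hg
    have hgi_int : Integrable (fun ω => g ω i) μ := hgi2.integrable one_le_two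
    have hfim : StronglyMeasurable[F] (fun ω => f ω i) :=
      (EuclideanSpace.proj i : E k →L[ℝ] ℝ).continuous.comp_stronglyMeasurable hfm
    have hgcond : μ[(fun ω => g ω i)|F] =ᵐ[μ] 0 := by
      have h0 : (fun _ : Ω => (0:ℝ)) =ᵐ[μ] μ[(fun ω => g ω i)|F] := by
        refine ae_eq_condExp_of_forall_setIntegral_eq hF hgi_int
          (fun s _ _ => (integrable_zero _ _ _).integrableOn) (fun s hs hμs => ?_)
          (StronglyMeasurable.aestronglyMeasurable stronglyMeasurable_const)
        have h1 : ∫ ω in s, g ω i ∂μ = (EuclideanSpace.proj i : E k →L[ℝ] ℝ) (∫ ω in s, g ω ∂μ) := by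
          rw [← ContinuousLinearMap.integral_comp_comm _ hginteg.integrableOn]
          rfl
        have h2 : ∫ ω in s, g ω ∂μ = 0 := by
          rw [← setIntegral_condExp hF hginteg hs,
            setIntegral_congr_ae (hF s hs) (hcond.mono fun ω hω _ => hω)]
          simp
        rw [h1, h2]
        simp
      exact h0.symm
    have hmul_int : Integrable (fun ω => f ω i * g ω i) μ := integrable_mul_of_L2 hfi2 hgi2
    have hpull : μ[(fun ω => f ω i) * (fun ω => g ω i)|F] =ᵐ[μ]
        (fun ω => f ω i) * μ[(fun ω => g ω i)|F] :=
      condExp_mul_of_stronglyMeasurable_left hfim (by exact hmul_int) hgi_int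
    have heq : ∫ ω, f ω i * g ω i ∂μ
        = ∫ ω, (μ[(fun ω => f ω i) * (fun ω => g ω i)|F]) ω ∂μ := by
      rw [integral_condExp (f := (fun ω => f ω i) * (fun ω => g ω i)) hF]
      rfl
    rw [heq]
    have hzero : μ[(fun ω => f ω i) * (fun ω => g ω i)|F] =ᵐ[μ] 0 := by
      refine hpull.trans ?_
      filter_upwards [hgcond] with ω hω
      simp [Pi.mul_apply, hω]
    rw [integral_congr_ae hzero]
    simp
  have hinner : ∀ ω, ⟪f ω, g ω⟫ = ∑ i, f ω i * g ω i := by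
    intro ω
    simp [PiLp.inner_apply, RCLike.inner_apply, mul_comm]
  calc ∫ ω, ⟪f ω, g ω⟫ ∂μ = ∫ ω, ∑ i, f ω i * g ω i ∂μ := by
        simp_rw [hinner]
    _ = ∑ i, ∫ ω, f ω i * g ω i ∂μ := by
        refine integral_finset_sum _ (fun i _ => ?_)
        refine integrable_mul_of_L2 ?_ ?_
        · simpa [Function.comp_def] using (EuclideanSpace.proj i : E k →L[ℝ] ℝ).comp_memLp' hf
        · simpa [Function.comp_def] using (EuclideanSpace.proj i : E k →L[ℝ] ℝ).comp_memLp' hg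
    _ = 0 := by simp [key]

lemma integral_norm_sq_sum_noise_le [IsProbabilityMeasure μ] {k : ℕ} (ℱ : Filtration ℕ m0)
    (g : ℕ → Ω → E k)
    (hmeas : ∀ t, StronglyMeasurable[ℱ (t+1)] (g t))
    (hL2 : ∀ t, MemLp (g t) 2 μ) (C : ℝ)
    (hcond : ∀ t, μ[g t|ℱ t] =ᵐ[μ] 0)
    (hvar : ∀ t, ∀ᵐ ω ∂μ, (μ[fun ω' => ‖g t ω'‖^2|ℱ t]) ω ≤ C) :
    ∀ T : ℕ, ∫ ω, ‖∑ t ∈ Finset.range T, g t ω‖^2 ∂μ ≤ T * C := by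
  intro T
  induction T with
  | zero => simp
  | succ T ih =>
    have hS2 : MemLp (fun ω => ∑ t ∈ Finset.range T, g t ω) 2 μ := by
      have h := memLp_finset_sum' (Finset.range T) (fun t (_ : t ∈ Finset.range T) => hL2 t)
      have hfe : (∑ t ∈ Finset.range T, g t) = fun ω => ∑ t ∈ Finset.range T, g t ω := by
        funext ω; simp
      rwa [hfe] at h
    have hSm : StronglyMeasurable[ℱ T] (fun ω => ∑ t ∈ Finset.range T, g t ω) :=
      Finset.stronglyMeasurable_fun_sum _
        (fun t ht => (hmeas t).mono (ℱ.mono (Finset.mem_range.1 ht)))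
    have hgm2 : MemLp (g T) 2 μ := hL2 T
    have hcross : ∫ ω, ⟪∑ t ∈ Finset.range T, g t ω, g T ω⟫ ∂μ = 0 :=
      integral_inner_zero (ℱ.le T) hSm hS2 hgm2 (hcond T)
    have hg_int_sq : Integrable (fun ω => ‖g T ω‖^2) μ := hgm2.norm.integrable_sq
    have hvar_le : ∫ ω, ‖g T ω‖^2 ∂μ ≤ C := by
      rw [← integral_condExp (f := fun ω => ‖g T ω‖^2) (ℱ.le T)]
      calc ∫ ω, (μ[fun ω' => ‖g T ω'‖^2|ℱ T]) ω ∂μ ≤ ∫ _ω, C ∂μ :=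
            integral_mono_ae integrable_condExp (integrable_const C) (hvar T)
        _ = C := by simp
    have int1 : Integrable (fun ω => ‖∑ t ∈ Finset.range T, g t ω‖^2) μ :=
      hS2.norm.integrable_sq
    have int2 : Integrable (fun ω => 2 * ⟪∑ t ∈ Finset.range T, g t ω, g T ω⟫) μ :=
      (integrable_inner_of_L2 hS2 hgm2).const_mul 2
    have hexp : ∀ ω, ‖∑ t ∈ Finset.range (T+1), g t ω‖^2
        = ‖∑ t ∈ Finset.range T, g t ω‖^2
          + 2 * ⟪∑ t ∈ Finset.range T, g t ω, g T ω⟫ + ‖g T ω‖^2 := by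
      intro ω
      rw [Finset.sum_range_succ]
      exact norm_add_sq_real _ _
    calc ∫ ω, ‖∑ t ∈ Finset.range (T+1), g t ω‖^2 ∂μ
        = ∫ ω, (‖∑ t ∈ Finset.range T, g t ω‖^2
            + 2 * ⟪∑ t ∈ Finset.range T, g t ω, g T ω⟫ + ‖g T ω‖^2) ∂μ := by
          simp_rw [hexp]
      _ = (∫ ω, ‖∑ t ∈ Finset.range T, g t ω‖^2 ∂μ)
            + (∫ ω, 2 * ⟪∑ t ∈ Finset.range T, g t ω, g T ω⟫ ∂μ)
            + ∫ ω, ‖g T ω‖^2 ∂μ := by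
          have intAB : Integrable (fun ω => ‖∑ t ∈ Finset.range T, g t ω‖^2
              + 2 * ⟪∑ t ∈ Finset.range T, g t ω, g T ω⟫) μ := int1.add int2
          have e1 := integral_add intAB hg_int_sq
          have e2 := integral_add int1 int2
          rw [e1, e2]
      _ ≤ T * C + 2 * 0 + C := by
          have e3 : ∫ ω, 2 * ⟪∑ t ∈ Finset.range T, g t ω, g T ω⟫ ∂μ
              = 2 * ∫ ω, ⟪∑ t ∈ Finset.range T, g t ω, g T ω⟫ ∂μ := integral_const_mul 2 _
          rw [e3, hcross]
          simp only [mul_zero]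
          linarith [ih, hvar_le]
      _ = (T+1 : ℕ) * C := by push_cast; ring

end Prob

set_option maxHeartbeats 4000000 in
/-- statistical error bound for the slow Polyak–Ruppert average:
`E‖ȳ_T - y_p*‖² ≤ (4 C_ψ/m_y² + 4 ‖A_sf‖₂² C_ε/(m_y² m_x²)) / T + D / T²`. -/
theorem slow_statistical_error_bound {n m d r : ℕ}
    (Aff : Matrix (Fin n) (Fin n) ℝ) (Afs : Matrix (Fin n) (Fin m) ℝ)
    (Asf : Matrix (Fin m) (Fin n) ℝ) (Ass : Matrix (Fin m) (Fin m) ℝ)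
    (b1 : E n) (b2 : E m)
    (UX : Matrix (Fin n) (Fin d) ℝ) (UY : Matrix (Fin m) (Fin r) ℝ)
    (hUX : UXᵀ * UX = 1) (hUY : UYᵀ * UY = 1)
    {Ω : Type*} {m0 : MeasurableSpace Ω} (μ : Measure Ω)
    [IsProbabilityMeasure μ] (ℱ : Filtration ℕ m0)
    (α β : ℝ) (hα : 0 < α) (hβ : 0 < β)
    (x : ℕ → Ω → E n) (y : ℕ → Ω → E m) (ε : ℕ → Ω → E n) (ψ : ℕ → Ω → E m)
    (hx0 : ∀ ω, x 0 ω ∈ Set.range (mv UX))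
    (hy0 : ∀ ω, y 0 ω ∈ Set.range (mv UY))
    (hrecx : ∀ t : ℕ, ∀ ω, x (t + 1) ω =
      mv (UX * UXᵀ) (x t ω + α • (mv Aff (x t ω) + mv Afs (y t ω) - b1 + ε t ω)))
    (hrecy : ∀ t : ℕ, ∀ ω, y (t + 1) ω =
      mv (UY * UYᵀ) (y t ω + β • (mv Asf (x t ω) + mv Ass (y t ω) - b2 + ψ t ω)))
    (hadapted : ∀ t : ℕ, StronglyMeasurable[ℱ t] (x t) ∧ StronglyMeasurable[ℱ t] (y t))
    (hnoise_meas : ∀ t : ℕ, StronglyMeasurable[ℱ (t + 1)] (ε t) ∧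
      StronglyMeasurable[ℱ (t + 1)] (ψ t))
    (hnoiseL2 : ∀ t : ℕ, MemLp (ε t) 2 μ ∧ MemLp (ψ t) 2 μ)
    (Cε Cψ : ℝ)
    (hmdε : ∀ t : ℕ, μ[ε t | ℱ t] =ᵐ[μ] 0)
    (hmdψ : ∀ t : ℕ, μ[ψ t | ℱ t] =ᵐ[μ] 0)
    (hvarε : ∀ t : ℕ, ∀ᵐ ω ∂μ, (μ[fun ω' => ‖ε t ω'‖ ^ 2 | ℱ t]) ω ≤ Cε)
    (hvarψ : ∀ t : ℕ, ∀ᵐ ω ∂μ, (μ[fun ω' => ‖ψ t ω'‖ ^ 2 | ℱ t]) ω ≤ Cψ)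
    (h1 : IsUnit (UXᵀ * Aff * UX))
    (hmx : 0 < sigmaMin (UXᵀ * Aff * UX))
    (h2 : IsUnit (UYᵀ * (Ass - Asf * resolvent UX Aff * Afs) * UY))
    (hmy : 0 < sigmaMin (UYᵀ * (Ass - Asf * resolvent UX Aff * Afs) * UY))
    (hiterL2 : ∀ t : ℕ, MemLp (x t) 2 μ ∧ MemLp (y t) 2 μ)
    (B : ℝ) (hB : ∀ t : ℕ, (∫ ω, (‖x t ω‖ ^ 2 + ‖y t ω‖ ^ 2) ∂μ) ≤ B)
    (xp : E n) (yp : E m)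
    (hxp : xp ∈ Set.range (mv UX)) (hyp : yp ∈ Set.range (mv UY))
    (hsolx : mv (UX * UXᵀ) (mv Aff xp + mv Afs yp - b1) = 0)
    (hsoly : mv (UY * UYᵀ) (mv Asf xp + mv Ass yp - b2) = 0) :
    ∃ D : ℝ, 0 ≤ D ∧ ∀ T : ℕ, 1 ≤ T →
      (∫ ω, ‖(T : ℝ)⁻¹ • (∑ t ∈ Finset.range T, y t ω) - yp‖ ^ 2 ∂μ) ≤
        (4 * Cψ / sigmaMin (UYᵀ * (Ass - Asf * resolvent UX Aff * Afs) * UY) ^ 2 +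
          4 * specNorm Asf ^ 2 * Cε /
            (sigmaMin (UYᵀ * (Ass - Asf * resolvent UX Aff * Afs) * UY) ^ 2 *
              sigmaMin (UXᵀ * Aff * UX) ^ 2)) / T +
        D / T ^ 2 := by
  classical
  set Ff := UXᵀ * Aff * UX with hFf
  set Fs := UXᵀ * Afs * UY with hFs
  set Sf := UYᵀ * Asf * UX with hSf
  set Ss := UYᵀ * Ass * UY with hSs
  set Δ := UYᵀ * (Ass - Asf * resolvent UX Aff * Afs) * UY with hΔ
  set P := Sf * Ff⁻¹ with hP
  set sA := specNorm Asf with hsA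
  have hFfdet : IsUnit Ff.det := (Matrix.isUnit_iff_isUnit_det Ff).1 h1
  have hΔeq : Δ = Ss - P * Fs := by
    rw [hΔ, hSs, hP, hSf, hFs, hFf]
    simp only [resolvent, Matrix.mul_sub, Matrix.sub_mul, Matrix.mul_assoc]
  -- projection facts
  have hUXproj : UX * UXᵀ * UX = UX := by rw [Matrix.mul_assoc, hUX, Matrix.mul_one]
  have hUYproj : UY * UYᵀ * UY = UY := by rw [Matrix.mul_assoc, hUY, Matrix.mul_one]
  have fixX : ∀ z : E n, z ∈ Set.range (mv UX) → mv (UX * UXᵀ) z = z := by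
    rintro z ⟨w, rfl⟩
    rw [mv_mv, hUXproj]
  have fixY : ∀ z : E m, z ∈ Set.range (mv UY) → mv (UY * UYᵀ) z = z := by
    rintro z ⟨w, rfl⟩
    rw [mv_mv, hUYproj]
  have memX : ∀ t ω, x t ω ∈ Set.range (mv UX) := by
    intro t
    induction t with
    | zero => exact hx0
    | succ t _ =>
      intro ω
      rw [hrecx t ω, ← mv_mv]
      exact ⟨_, rfl⟩
  have memY : ∀ t ω, y t ω ∈ Set.range (mv UY) := by
    intro t
    induction t with
    | zero => exact hy0
    | succ t _ =>
      intro ω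
      rw [hrecy t ω, ← mv_mv]
      exact ⟨_, rfl⟩
  have fixx : ∀ t ω, mv (UX * UXᵀ) (x t ω) = x t ω := fun t ω => fixX _ (memX t ω)
  have fixy : ∀ t ω, mv (UY * UYᵀ) (y t ω) = y t ω := fun t ω => fixY _ (memY t ω)
  have fixxp : mv (UX * UXᵀ) xp = xp := fixX _ hxp
  have fixyp : mv (UY * UYᵀ) yp = yp := fixY _ hyp
  -- recursion in residual form
  have hstepx : ∀ t ω, x (t + 1) ω = x t ω + α • mv (UX * UXᵀ)
      (mv Aff (x t ω - xp) + mv Afs (y t ω - yp) + ε t ω) := by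
    intro t ω
    rw [hrecx t ω, mv_add, fixx t ω, mv_smul]
    congr 2
    have hdecomp : mv Aff (x t ω) + mv Afs (y t ω) - b1 + ε t ω
        = (mv Aff (x t ω - xp) + mv Afs (y t ω - yp) + ε t ω)
          + (mv Aff xp + mv Afs yp - b1) := by
      rw [mv_sub, mv_sub]; abel
    rw [hdecomp, mv_add, hsolx, add_zero]
  have hstepy : ∀ t ω, y (t + 1) ω = y t ω + β • mv (UY * UYᵀ)
      (mv Asf (x t ω - xp) + mv Ass (y t ω - yp) + ψ t ω) := by
    intro t ω
    rw [hrecy t ω, mv_add, fixy t ω, mv_smul]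
    congr 2
    have hdecomp : mv Asf (x t ω) + mv Ass (y t ω) - b2 + ψ t ω
        = (mv Asf (x t ω - xp) + mv Ass (y t ω - yp) + ψ t ω)
          + (mv Asf xp + mv Ass yp - b2) := by
      rw [mv_sub, mv_sub]; abel
    rw [hdecomp, mv_add, hsoly, add_zero]
  -- telescoping
  have htelex : ∀ ω, ∀ T : ℕ, x T ω - x 0 ω
      = α • ∑ t ∈ Finset.range T, mv (UX * UXᵀ)
          (mv Aff (x t ω - xp) + mv Afs (y t ω - yp) + ε t ω) := by
    intro ω T
    induction T with
    | zero => simp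
    | succ T ih =>
      rw [hstepx T ω, Finset.sum_range_succ, smul_add, ← ih]
      abel
  have hteley : ∀ ω, ∀ T : ℕ, y T ω - y 0 ω
      = β • ∑ t ∈ Finset.range T, mv (UY * UYᵀ)
          (mv Asf (x t ω - xp) + mv Ass (y t ω - yp) + ψ t ω) := by
    intro ω T
    induction T with
    | zero => simp
    | succ T ih =>
      rw [hstepy T ω, Finset.sum_range_succ, smul_add, ← ih]
      abel
  -- operator norm bounds
  have hbSf : ∀ w : E d, ‖mv Sf w‖ ≤ sA * ‖w‖ := by
    intro w
    have hrw : mv Sf w = mv UYᵀ (mv Asf (mv UX w)) := by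
      rw [mv_mv, mv_mv, hSf, Matrix.mul_assoc]
    calc ‖mv Sf w‖ = ‖mv UYᵀ (mv Asf (mv UX w))‖ := by rw [hrw]
      _ ≤ ‖mv Asf (mv UX w)‖ := norm_mvT_le hUY _
      _ ≤ sA * ‖mv UX w‖ := norm_mv_le _ _
      _ = sA * ‖w‖ := by rw [norm_mv_orth hUX]
  have hbP : ∀ z : E d, ‖mv P z‖ ≤ sA * (sigmaMin Ff)⁻¹ * ‖z‖ := by
    intro z
    have hrw : mv P z = mv Sf (mv Ff⁻¹ z) := by rw [mv_mv, hP]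
    calc ‖mv P z‖ = ‖mv Sf (mv Ff⁻¹ z)‖ := by rw [hrw]
      _ ≤ sA * ‖mv Ff⁻¹ z‖ := hbSf _
      _ ≤ sA * ((sigmaMin Ff)⁻¹ * ‖z‖) :=
          mul_le_mul_of_nonneg_left (norm_mv_inv_le h1 hmx z) (by rw [hsA]; exact specNorm_nonneg _)
      _ = sA * (sigmaMin Ff)⁻¹ * ‖z‖ := by ring
  have hsA0 : 0 ≤ sA := by rw [hsA]; exact specNorm_nonneg _
  have hbPX : ∀ w : E n, ‖mv P (mv UXᵀ w)‖ ≤ sA * (sigmaMin Ff)⁻¹ * ‖w‖ := by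
    intro w
    refine (hbP _).trans ?_
    exact mul_le_mul_of_nonneg_left (norm_mvT_le hUX w)
      (mul_nonneg hsA0 (inv_nonneg.2 hmx.le))
  -- pointwise key bound
  have key : ∀ T : ℕ, 1 ≤ T → ∀ ω,
      ‖(T : ℝ)⁻¹ • (∑ t ∈ Finset.range T, y t ω) - yp‖ ^ 2
      ≤ 4 * ((T:ℝ)⁻¹)^2 * ((sigmaMin Δ)⁻¹)^2 *
        (‖∑ t ∈ Finset.range T, ψ t ω‖^2
         + (sA * (sigmaMin Ff)⁻¹)^2 * ‖∑ t ∈ Finset.range T, ε t ω‖^2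
         + (β⁻¹)^2 * ‖y T ω - y 0 ω‖^2
         + (α⁻¹ * sA * (sigmaMin Ff)⁻¹)^2 * ‖x T ω - x 0 ω‖^2) := by
    intro T hT ω
    have hTpos : (0:ℝ) < (T:ℝ) := by exact_mod_cast hT
    set U : E n := ∑ t ∈ Finset.range T, (x t ω - xp) with hU
    set V : E m := ∑ t ∈ Finset.range T, (y t ω - yp) with hV
    set Sε : E n := ∑ t ∈ Finset.range T, ε t ω with hSε
    set Sψ : E m := ∑ t ∈ Finset.range T, ψ t ω with hSψ
    set u : E d := mv UXᵀ U with hu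
    set v : E r := mv UYᵀ V with hv
    have hfixsubx : ∀ t, mv (UX * UXᵀ) (x t ω - xp) = x t ω - xp := fun t => by
      rw [mv_sub, fixx, fixxp]
    have hfixsuby : ∀ t, mv (UY * UYᵀ) (y t ω - yp) = y t ω - yp := fun t => by
      rw [mv_sub, fixy, fixyp]
    have hUfix : mv (UX * UXᵀ) U = U := by
      rw [hU, mv_sum]
      exact Finset.sum_congr rfl fun t _ => hfixsubx t
    have hVfix : mv (UY * UYᵀ) V = V := by
      rw [hV, mv_sum]
      exact Finset.sum_congr rfl fun t _ => hfixsuby t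
    have hUu : mv UX u = U := by rw [hu, mv_mv]; exact hUfix
    have hVv : mv UY v = V := by rw [hv, mv_mv]; exact hVfix
    have hsum_splitx : mv (UX * UXᵀ) (mv Aff U + mv Afs V + Sε)
        = ∑ t ∈ Finset.range T, mv (UX * UXᵀ)
            (mv Aff (x t ω - xp) + mv Afs (y t ω - yp) + ε t ω) := by
      rw [hU, hV, hSε, mv_sum, mv_sum, ← Finset.sum_add_distrib, ← Finset.sum_add_distrib,
        mv_sum]
    have hsum_splity : mv (UY * UYᵀ) (mv Asf U + mv Ass V + Sψ)
        = ∑ t ∈ Finset.range T, mv (UY * UYᵀ)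
            (mv Asf (x t ω - xp) + mv Ass (y t ω - yp) + ψ t ω) := by
      rw [hU, hV, hSψ, mv_sum, mv_sum, ← Finset.sum_add_distrib, ← Finset.sum_add_distrib,
        mv_sum]
    have eqx : x T ω - x 0 ω = α • mv (UX * UXᵀ) (mv Aff U + mv Afs V + Sε) := by
      rw [hsum_splitx]; exact htelex ω T
    have eqy : y T ω - y 0 ω = β • mv (UY * UYᵀ) (mv Asf U + mv Ass V + Sψ) := by
      rw [hsum_splity]; exact hteley ω T
    have hUXT : UXᵀ * (UX * UXᵀ) = UXᵀ := by rw [← Matrix.mul_assoc, hUX, Matrix.one_mul]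
    have hUYT : UYᵀ * (UY * UYᵀ) = UYᵀ := by rw [← Matrix.mul_assoc, hUY, Matrix.one_mul]
    have eq1 : mv UXᵀ (x T ω - x 0 ω) = α • (mv Ff u + mv Fs v + mv UXᵀ Sε) := by
      rw [eqx, mv_smul]
      congr 1
      calc mv UXᵀ (mv (UX * UXᵀ) (mv Aff U + mv Afs V + Sε))
          = mv UXᵀ (mv Aff U + mv Afs V + Sε) := by rw [mv_mv, hUXT]
        _ = mv UXᵀ (mv Aff U) + mv UXᵀ (mv Afs V) + mv UXᵀ Sε := by rw [mv_add, mv_add]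
        _ = mv Ff u + mv Fs v + mv UXᵀ Sε := by
            have cA : mv UXᵀ (mv Aff U) = mv Ff u := by
              conv_lhs => rw [← hUu]
              rw [mv_mv Aff UX u, mv_mv UXᵀ (Aff * UX) u, hFf, Matrix.mul_assoc]
            have cB : mv UXᵀ (mv Afs V) = mv Fs v := by
              conv_lhs => rw [← hVv]
              rw [mv_mv Afs UY v, mv_mv UXᵀ (Afs * UY) v, hFs, Matrix.mul_assoc]
            rw [cA, cB]
    have eq2 : mv UYᵀ (y T ω - y 0 ω) = β • (mv Sf u + mv Ss v + mv UYᵀ Sψ) := by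
      rw [eqy, mv_smul]
      congr 1
      calc mv UYᵀ (mv (UY * UYᵀ) (mv Asf U + mv Ass V + Sψ))
          = mv UYᵀ (mv Asf U + mv Ass V + Sψ) := by rw [mv_mv, hUYT]
        _ = mv UYᵀ (mv Asf U) + mv UYᵀ (mv Ass V) + mv UYᵀ Sψ := by rw [mv_add, mv_add]
        _ = mv Sf u + mv Ss v + mv UYᵀ Sψ := by
            have cA : mv UYᵀ (mv Asf U) = mv Sf u := by
              conv_lhs => rw [← hUu]
              rw [mv_mv Asf UX u, mv_mv UYᵀ (Asf * UX) u, hSf, Matrix.mul_assoc]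
            have cB : mv UYᵀ (mv Ass V) = mv Ss v := by
              conv_lhs => rw [← hVv]
              rw [mv_mv Ass UY v, mv_mv UYᵀ (Ass * UY) v, hSs, Matrix.mul_assoc]
            rw [cA, cB]
    have e1 : mv Ff u + mv Fs v + mv UXᵀ Sε = α⁻¹ • mv UXᵀ (x T ω - x 0 ω) := by
      rw [eq1, smul_smul, inv_mul_cancel₀ hα.ne', one_smul]
    have e2 : mv Sf u + mv Ss v + mv UYᵀ Sψ = β⁻¹ • mv UYᵀ (y T ω - y 0 ω) := by
      rw [eq2, smul_smul, inv_mul_cancel₀ hβ.ne', one_smul]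
    have hPFf : P * Ff = Sf := by
      rw [hP, Matrix.mul_assoc, Matrix.nonsing_inv_mul Ff hFfdet, Matrix.mul_one]
    have e1' : mv Sf u + mv (P * Fs) v + mv P (mv UXᵀ Sε)
        = α⁻¹ • mv P (mv UXᵀ (x T ω - x 0 ω)) := by
      have h := congrArg (mv P) e1
      rw [mv_add, mv_add, mv_smul, mv_mv P Ff u, mv_mv P Fs v, hPFf] at h
      exact h
    have hΔv : mv Δ v = β⁻¹ • mv UYᵀ (y T ω - y 0 ω) - mv UYᵀ Sψ
        - α⁻¹ • mv P (mv UXᵀ (x T ω - x 0 ω)) + mv P (mv UXᵀ Sε) := by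
      have hSsv : mv Ss v = β⁻¹ • mv UYᵀ (y T ω - y 0 ω) - mv Sf u - mv UYᵀ Sψ := by
        rw [← e2]; abel
      have hPFsv : mv (P * Fs) v
          = α⁻¹ • mv P (mv UXᵀ (x T ω - x 0 ω)) - mv Sf u - mv P (mv UXᵀ Sε) := by
        rw [← e1']; abel
      rw [hΔeq, mv_matsub, hSsv, hPFsv]
      abel
    have hnv : ‖v‖ ≤ (sigmaMin Δ)⁻¹ * ‖mv Δ v‖ := by
      have h := norm_mv_inv_le h2 hmy (mv Δ v)
      rwa [mv_inv_mv h2 v] at h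
    have hbound : ‖mv Δ v‖ ≤ ‖Sψ‖ + sA * (sigmaMin Ff)⁻¹ * ‖Sε‖
        + β⁻¹ * ‖y T ω - y 0 ω‖ + α⁻¹ * sA * (sigmaMin Ff)⁻¹ * ‖x T ω - x 0 ω‖ := by
      rw [hΔv]
      have t1 : ‖β⁻¹ • mv UYᵀ (y T ω - y 0 ω)‖ ≤ β⁻¹ * ‖y T ω - y 0 ω‖ := by
        rw [norm_smul, Real.norm_eq_abs, abs_of_pos (inv_pos.2 hβ)]
        exact mul_le_mul_of_nonneg_left (norm_mvT_le hUY _) (inv_pos.2 hβ).le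
      have t2 : ‖mv UYᵀ Sψ‖ ≤ ‖Sψ‖ := norm_mvT_le hUY _
      have t3 : ‖α⁻¹ • mv P (mv UXᵀ (x T ω - x 0 ω))‖
          ≤ α⁻¹ * sA * (sigmaMin Ff)⁻¹ * ‖x T ω - x 0 ω‖ := by
        rw [norm_smul, Real.norm_eq_abs, abs_of_pos (inv_pos.2 hα)]
        calc α⁻¹ * ‖mv P (mv UXᵀ (x T ω - x 0 ω))‖
            ≤ α⁻¹ * (sA * (sigmaMin Ff)⁻¹ * ‖x T ω - x 0 ω‖) :=
              mul_le_mul_of_nonneg_left (hbPX _) (inv_pos.2 hα).le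
          _ = α⁻¹ * sA * (sigmaMin Ff)⁻¹ * ‖x T ω - x 0 ω‖ := by ring
      have t4 : ‖mv P (mv UXᵀ Sε)‖ ≤ sA * (sigmaMin Ff)⁻¹ * ‖Sε‖ := hbPX _
      have htri : ‖β⁻¹ • mv UYᵀ (y T ω - y 0 ω) - mv UYᵀ Sψ
            - α⁻¹ • mv P (mv UXᵀ (x T ω - x 0 ω)) + mv P (mv UXᵀ Sε)‖
          ≤ ‖β⁻¹ • mv UYᵀ (y T ω - y 0 ω)‖ + ‖mv UYᵀ Sψ‖
            + ‖α⁻¹ • mv P (mv UXᵀ (x T ω - x 0 ω))‖ + ‖mv P (mv UXᵀ Sε)‖ := by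
        calc ‖β⁻¹ • mv UYᵀ (y T ω - y 0 ω) - mv UYᵀ Sψ
            - α⁻¹ • mv P (mv UXᵀ (x T ω - x 0 ω)) + mv P (mv UXᵀ Sε)‖
            ≤ ‖β⁻¹ • mv UYᵀ (y T ω - y 0 ω) - mv UYᵀ Sψ
              - α⁻¹ • mv P (mv UXᵀ (x T ω - x 0 ω))‖ + ‖mv P (mv UXᵀ Sε)‖ := norm_add_le _ _
          _ ≤ (‖β⁻¹ • mv UYᵀ (y T ω - y 0 ω) - mv UYᵀ Sψ‖
              + ‖α⁻¹ • mv P (mv UXᵀ (x T ω - x 0 ω))‖) + ‖mv P (mv UXᵀ Sε)‖ :=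
              add_le_add_left (norm_sub_le _ _) _
          _ ≤ ((‖β⁻¹ • mv UYᵀ (y T ω - y 0 ω)‖ + ‖mv UYᵀ Sψ‖)
              + ‖α⁻¹ • mv P (mv UXᵀ (x T ω - x 0 ω))‖) + ‖mv P (mv UXᵀ Sε)‖ :=
              add_le_add_left (add_le_add_left (norm_sub_le _ _) _) _
      refine htri.trans ?_
      linarith [t1, t2, t3, t4]
    have havg : (T : ℝ)⁻¹ • (∑ t ∈ Finset.range T, y t ω) - yp = (T : ℝ)⁻¹ • V := by
      rw [hV, Finset.sum_sub_distrib, smul_sub, Finset.sum_const, Finset.card_range]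
      have hTy : (T • yp : E m) = (T : ℝ) • yp :=
        (Nat.cast_smul_eq_nsmul ℝ T yp).symm
      rw [hTy, smul_smul, inv_mul_cancel₀ hTpos.ne', one_smul]
    have hnormavg : ‖(T : ℝ)⁻¹ • (∑ t ∈ Finset.range T, y t ω) - yp‖ = (T : ℝ)⁻¹ * ‖v‖ := by
      rw [havg, norm_smul, Real.norm_eq_abs, abs_of_pos (inv_pos.2 hTpos), ← hVv,
        norm_mv_orth hUY]
    set n1 := ‖Sψ‖ with hn1
    set n2 := sA * (sigmaMin Ff)⁻¹ * ‖Sε‖ with hn2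
    set n3 := β⁻¹ * ‖y T ω - y 0 ω‖ with hn3
    set n4 := α⁻¹ * sA * (sigmaMin Ff)⁻¹ * ‖x T ω - x 0 ω‖ with hn4
    have h5 : ‖v‖ ≤ (sigmaMin Δ)⁻¹ * (n1 + n2 + n3 + n4) :=
      hnv.trans (mul_le_mul_of_nonneg_left hbound (inv_nonneg.2 hmy.le))
    have hsq : ‖v‖^2 ≤ ((sigmaMin Δ)⁻¹)^2 * (n1 + n2 + n3 + n4)^2 := by
      have := pow_le_pow_left₀ (norm_nonneg v) h5 2
      rwa [mul_pow] at this
    have h4sq : (n1 + n2 + n3 + n4)^2 ≤ 4 * (n1^2 + n2^2 + n3^2 + n4^2) := by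
      nlinarith [sq_nonneg (n1 - n2), sq_nonneg (n1 - n3), sq_nonneg (n1 - n4),
        sq_nonneg (n2 - n3), sq_nonneg (n2 - n4), sq_nonneg (n3 - n4)]
    have step1 : ((T:ℝ)⁻¹)^2 * ‖v‖^2
        ≤ ((T:ℝ)⁻¹)^2 * (((sigmaMin Δ)⁻¹)^2 * (n1 + n2 + n3 + n4)^2) :=
      mul_le_mul_of_nonneg_left hsq (sq_nonneg _)
    have step2 : ((sigmaMin Δ)⁻¹)^2 * (n1 + n2 + n3 + n4)^2
        ≤ ((sigmaMin Δ)⁻¹)^2 * (4 * (n1^2 + n2^2 + n3^2 + n4^2)) :=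
      mul_le_mul_of_nonneg_left h4sq (sq_nonneg _)
    calc ‖(T : ℝ)⁻¹ • (∑ t ∈ Finset.range T, y t ω) - yp‖ ^ 2
        = ((T:ℝ)⁻¹)^2 * ‖v‖^2 := by rw [hnormavg]; ring
      _ ≤ ((T:ℝ)⁻¹)^2 * (((sigmaMin Δ)⁻¹)^2 * (n1 + n2 + n3 + n4)^2) := step1
      _ ≤ ((T:ℝ)⁻¹)^2 * (((sigmaMin Δ)⁻¹)^2 * (4 * (n1^2 + n2^2 + n3^2 + n4^2))) :=
          mul_le_mul_of_nonneg_left step2 (sq_nonneg _)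
      _ = 4 * ((T:ℝ)⁻¹)^2 * ((sigmaMin Δ)⁻¹)^2 *
          (n1^2 + (sA * (sigmaMin Ff)⁻¹)^2 * ‖Sε‖^2
           + (β⁻¹)^2 * ‖y T ω - y 0 ω‖^2
           + (α⁻¹ * sA * (sigmaMin Ff)⁻¹)^2 * ‖x T ω - x 0 ω‖^2) := by
          rw [hn2, hn3, hn4]; ring
  -- integrated noise bounds
  have hnoiseψ : ∀ T : ℕ, ∫ ω, ‖∑ t ∈ Finset.range T, ψ t ω‖^2 ∂μ ≤ T * Cψ :=
    integral_norm_sq_sum_noise_le ℱ ψ (fun t => (hnoise_meas t).2) (fun t => (hnoiseL2 t).2)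
      Cψ hmdψ hvarψ
  have hnoiseε : ∀ T : ℕ, ∫ ω, ‖∑ t ∈ Finset.range T, ε t ω‖^2 ∂μ ≤ T * Cε :=
    integral_norm_sq_sum_noise_le ℱ ε (fun t => (hnoise_meas t).1) (fun t => (hnoiseL2 t).1)
      Cε hmdε hvarε
  have hB0 : (0:ℝ) ≤ B :=
    le_trans (integral_nonneg fun ω => by positivity) (hB 0)
  have hx_sq_le : ∀ t, ∫ ω, ‖x t ω‖^2 ∂μ ≤ B := by
    intro t
    refine le_trans ?_ (hB t)
    refine integral_mono ((hiterL2 t).1.norm.integrable_sq)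
      (((hiterL2 t).1.norm.integrable_sq).add ((hiterL2 t).2.norm.integrable_sq)) ?_
    intro ω
    exact le_add_of_nonneg_right (sq_nonneg _)
  have hy_sq_le : ∀ t, ∫ ω, ‖y t ω‖^2 ∂μ ≤ B := by
    intro t
    refine le_trans ?_ (hB t)
    refine integral_mono ((hiterL2 t).2.norm.integrable_sq)
      (((hiterL2 t).1.norm.integrable_sq).add ((hiterL2 t).2.norm.integrable_sq)) ?_
    intro ω
    exact le_add_of_nonneg_left (sq_nonneg _)
  have hdiffy_int : ∀ T : ℕ, Integrable (fun ω => ‖y T ω - y 0 ω‖^2) μ := fun T =>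
    (((hiterL2 T).2.sub (hiterL2 0).2).norm.integrable_sq)
  have hdiffx_int : ∀ T : ℕ, Integrable (fun ω => ‖x T ω - x 0 ω‖^2) μ := fun T =>
    (((hiterL2 T).1.sub (hiterL2 0).1).norm.integrable_sq)
  have hdiffy_le : ∀ T : ℕ, ∫ ω, ‖y T ω - y 0 ω‖^2 ∂μ ≤ 4 * B := by
    intro T
    have hint : Integrable (fun ω => 2 * ‖y T ω‖^2 + 2 * ‖y 0 ω‖^2) μ :=
      (((hiterL2 T).2.norm.integrable_sq).const_mul 2).add
        (((hiterL2 0).2.norm.integrable_sq).const_mul 2)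
    have h1' : ∫ ω, ‖y T ω - y 0 ω‖^2 ∂μ ≤ ∫ ω, (2 * ‖y T ω‖^2 + 2 * ‖y 0 ω‖^2) ∂μ := by
      refine integral_mono (hdiffy_int T) hint ?_
      intro ω
      have hns := norm_sub_le (y T ω) (y 0 ω)
      have hsq' : ‖y T ω - y 0 ω‖^2 ≤ (‖y T ω‖ + ‖y 0 ω‖)^2 :=
        pow_le_pow_left₀ (norm_nonneg _) hns 2
      show ‖y T ω - y 0 ω‖^2 ≤ 2 * ‖y T ω‖^2 + 2 * ‖y 0 ω‖^2
      nlinarith [hsq', sq_nonneg (‖y T ω‖ - ‖y 0 ω‖)]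
    have h2' : ∫ ω, (2 * ‖y T ω‖^2 + 2 * ‖y 0 ω‖^2) ∂μ
        = 2 * (∫ ω, ‖y T ω‖^2 ∂μ) + 2 * ∫ ω, ‖y 0 ω‖^2 ∂μ := by
      rw [integral_add (((hiterL2 T).2.norm.integrable_sq).const_mul 2)
        (((hiterL2 0).2.norm.integrable_sq).const_mul 2), integral_const_mul, integral_const_mul]
    rw [h2'] at h1'
    have := hy_sq_le T
    have := hy_sq_le 0
    linarith
  have hdiffx_le : ∀ T : ℕ, ∫ ω, ‖x T ω - x 0 ω‖^2 ∂μ ≤ 4 * B := by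
    intro T
    have hint : Integrable (fun ω => 2 * ‖x T ω‖^2 + 2 * ‖x 0 ω‖^2) μ :=
      (((hiterL2 T).1.norm.integrable_sq).const_mul 2).add
        (((hiterL2 0).1.norm.integrable_sq).const_mul 2)
    have h1' : ∫ ω, ‖x T ω - x 0 ω‖^2 ∂μ ≤ ∫ ω, (2 * ‖x T ω‖^2 + 2 * ‖x 0 ω‖^2) ∂μ := by
      refine integral_mono (hdiffx_int T) hint ?_
      intro ω
      have hns := norm_sub_le (x T ω) (x 0 ω)
      have hsq' : ‖x T ω - x 0 ω‖^2 ≤ (‖x T ω‖ + ‖x 0 ω‖)^2 :=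
        pow_le_pow_left₀ (norm_nonneg _) hns 2
      show ‖x T ω - x 0 ω‖^2 ≤ 2 * ‖x T ω‖^2 + 2 * ‖x 0 ω‖^2
      nlinarith [hsq', sq_nonneg (‖x T ω‖ - ‖x 0 ω‖)]
    have h2' : ∫ ω, (2 * ‖x T ω‖^2 + 2 * ‖x 0 ω‖^2) ∂μ
        = 2 * (∫ ω, ‖x T ω‖^2 ∂μ) + 2 * ∫ ω, ‖x 0 ω‖^2 ∂μ := by
      rw [integral_add (((hiterL2 T).1.norm.integrable_sq).const_mul 2)
        (((hiterL2 0).1.norm.integrable_sq).const_mul 2), integral_const_mul, integral_const_mul]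
    rw [h2'] at h1'
    have := hx_sq_le T
    have := hx_sq_le 0
    linarith
  have hSψL2 : ∀ T : ℕ, MemLp (fun ω => ∑ t ∈ Finset.range T, ψ t ω) 2 μ := by
    intro T
    have h := memLp_finset_sum' (Finset.range T)
      (fun t (_ : t ∈ Finset.range T) => (hnoiseL2 t).2)
    have hfe : (∑ t ∈ Finset.range T, ψ t) = fun ω => ∑ t ∈ Finset.range T, ψ t ω := by
      funext ω; simp
    rwa [hfe] at h
  have hSεL2 : ∀ T : ℕ, MemLp (fun ω => ∑ t ∈ Finset.range T, ε t ω) 2 μ := by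
    intro T
    have h := memLp_finset_sum' (Finset.range T)
      (fun t (_ : t ∈ Finset.range T) => (hnoiseL2 t).1)
    have hfe : (∑ t ∈ Finset.range T, ε t) = fun ω => ∑ t ∈ Finset.range T, ε t ω := by
      funext ω; simp
    rwa [hfe] at h
  -- choose D
  refine ⟨4 * ((sigmaMin Δ)⁻¹)^2 * ((β⁻¹)^2 * (4 * B)
      + (α⁻¹ * sA * (sigmaMin Ff)⁻¹)^2 * (4 * B)), ?_, ?_⟩
  · have h4B : (0:ℝ) ≤ 4 * B := by linarith
    have hsum : (0:ℝ) ≤ (β⁻¹)^2 * (4 * B) + (α⁻¹ * sA * (sigmaMin Ff)⁻¹)^2 * (4 * B) :=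
      add_nonneg (mul_nonneg (sq_nonneg _) h4B) (mul_nonneg (sq_nonneg _) h4B)
    exact mul_nonneg (mul_nonneg (by norm_num) (sq_nonneg _)) hsum
  intro T hT
  have hTpos : (0:ℝ) < (T:ℝ) := by exact_mod_cast hT
  set C0 := 4 * ((T:ℝ)⁻¹)^2 * ((sigmaMin Δ)⁻¹)^2 with hC0
  have hC00 : 0 ≤ C0 := by
    rw [hC0]
    exact mul_nonneg (mul_nonneg (by norm_num) (sq_nonneg _)) (sq_nonneg _)
  have hIψ : Integrable (fun ω => ‖∑ t ∈ Finset.range T, ψ t ω‖^2) μ :=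
    (hSψL2 T).norm.integrable_sq
  have hIε : Integrable (fun ω => (sA * (sigmaMin Ff)⁻¹)^2
      * ‖∑ t ∈ Finset.range T, ε t ω‖^2) μ :=
    ((hSεL2 T).norm.integrable_sq).const_mul _
  have hIy : Integrable (fun ω => (β⁻¹)^2 * ‖y T ω - y 0 ω‖^2) μ :=
    (hdiffy_int T).const_mul _
  have hIx : Integrable (fun ω => (α⁻¹ * sA * (sigmaMin Ff)⁻¹)^2
      * ‖x T ω - x 0 ω‖^2) μ :=
    (hdiffx_int T).const_mul _
  have hGint : Integrable (fun ω => C0 *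
      (‖∑ t ∈ Finset.range T, ψ t ω‖^2
       + (sA * (sigmaMin Ff)⁻¹)^2 * ‖∑ t ∈ Finset.range T, ε t ω‖^2
       + (β⁻¹)^2 * ‖y T ω - y 0 ω‖^2
       + (α⁻¹ * sA * (sigmaMin Ff)⁻¹)^2 * ‖x T ω - x 0 ω‖^2)) μ :=
    (((hIψ.add hIε).add hIy).add hIx).const_mul _
  have hle : ∫ ω, ‖(T : ℝ)⁻¹ • (∑ t ∈ Finset.range T, y t ω) - yp‖ ^ 2 ∂μ
      ≤ ∫ ω, C0 *
      (‖∑ t ∈ Finset.range T, ψ t ω‖^2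
       + (sA * (sigmaMin Ff)⁻¹)^2 * ‖∑ t ∈ Finset.range T, ε t ω‖^2
       + (β⁻¹)^2 * ‖y T ω - y 0 ω‖^2
       + (α⁻¹ * sA * (sigmaMin Ff)⁻¹)^2 * ‖x T ω - x 0 ω‖^2) ∂μ := by
    refine integral_mono_of_nonneg (ae_of_all _ fun ω => by positivity) hGint
      (ae_of_all _ fun ω => ?_)
    have := key T hT ω
    rw [hC0]
    exact this
  have hGval : ∫ ω, C0 *
      (‖∑ t ∈ Finset.range T, ψ t ω‖^2
       + (sA * (sigmaMin Ff)⁻¹)^2 * ‖∑ t ∈ Finset.range T, ε t ω‖^2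
       + (β⁻¹)^2 * ‖y T ω - y 0 ω‖^2
       + (α⁻¹ * sA * (sigmaMin Ff)⁻¹)^2 * ‖x T ω - x 0 ω‖^2) ∂μ
      = C0 * ((∫ ω, ‖∑ t ∈ Finset.range T, ψ t ω‖^2 ∂μ)
       + (sA * (sigmaMin Ff)⁻¹)^2 * (∫ ω, ‖∑ t ∈ Finset.range T, ε t ω‖^2 ∂μ)
       + (β⁻¹)^2 * (∫ ω, ‖y T ω - y 0 ω‖^2 ∂μ)
       + (α⁻¹ * sA * (sigmaMin Ff)⁻¹)^2 * ∫ ω, ‖x T ω - x 0 ω‖^2 ∂μ) := by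
    rw [integral_const_mul]
    congr 1
    have eA : ∫ ω, (‖∑ t ∈ Finset.range T, ψ t ω‖^2
         + (sA * (sigmaMin Ff)⁻¹)^2 * ‖∑ t ∈ Finset.range T, ε t ω‖^2
         + (β⁻¹)^2 * ‖y T ω - y 0 ω‖^2
         + (α⁻¹ * sA * (sigmaMin Ff)⁻¹)^2 * ‖x T ω - x 0 ω‖^2) ∂μ
        = (∫ ω, (‖∑ t ∈ Finset.range T, ψ t ω‖^2
         + (sA * (sigmaMin Ff)⁻¹)^2 * ‖∑ t ∈ Finset.range T, ε t ω‖^2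
         + (β⁻¹)^2 * ‖y T ω - y 0 ω‖^2) ∂μ)
         + ∫ ω, (α⁻¹ * sA * (sigmaMin Ff)⁻¹)^2 * ‖x T ω - x 0 ω‖^2 ∂μ :=
      integral_add ((hIψ.add hIε).add hIy) hIx
    have eB : ∫ ω, (‖∑ t ∈ Finset.range T, ψ t ω‖^2
         + (sA * (sigmaMin Ff)⁻¹)^2 * ‖∑ t ∈ Finset.range T, ε t ω‖^2
         + (β⁻¹)^2 * ‖y T ω - y 0 ω‖^2) ∂μ
        = (∫ ω, (‖∑ t ∈ Finset.range T, ψ t ω‖^2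
         + (sA * (sigmaMin Ff)⁻¹)^2 * ‖∑ t ∈ Finset.range T, ε t ω‖^2) ∂μ)
         + ∫ ω, (β⁻¹)^2 * ‖y T ω - y 0 ω‖^2 ∂μ :=
      integral_add (hIψ.add hIε) hIy
    have eC : ∫ ω, (‖∑ t ∈ Finset.range T, ψ t ω‖^2
         + (sA * (sigmaMin Ff)⁻¹)^2 * ‖∑ t ∈ Finset.range T, ε t ω‖^2) ∂μ
        = (∫ ω, ‖∑ t ∈ Finset.range T, ψ t ω‖^2 ∂μ)
         + ∫ ω, (sA * (sigmaMin Ff)⁻¹)^2 * ‖∑ t ∈ Finset.range T, ε t ω‖^2 ∂μ :=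
      integral_add hIψ hIε
    rw [eA, eB, eC, integral_const_mul, integral_const_mul, integral_const_mul]
  have hfinal : C0 * ((∫ ω, ‖∑ t ∈ Finset.range T, ψ t ω‖^2 ∂μ)
       + (sA * (sigmaMin Ff)⁻¹)^2 * (∫ ω, ‖∑ t ∈ Finset.range T, ε t ω‖^2 ∂μ)
       + (β⁻¹)^2 * (∫ ω, ‖y T ω - y 0 ω‖^2 ∂μ)
       + (α⁻¹ * sA * (sigmaMin Ff)⁻¹)^2 * ∫ ω, ‖x T ω - x 0 ω‖^2 ∂μ)
      ≤ C0 * ((T * Cψ) + (sA * (sigmaMin Ff)⁻¹)^2 * (T * Cε)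
       + (β⁻¹)^2 * (4 * B) + (α⁻¹ * sA * (sigmaMin Ff)⁻¹)^2 * (4 * B)) := by
    refine mul_le_mul_of_nonneg_left ?_ hC00
    gcongr ?_ + ?_ + ?_ + ?_
    · exact hnoiseψ T
    · exact mul_le_mul_of_nonneg_left (hnoiseε T) (sq_nonneg _)
    · exact mul_le_mul_of_nonneg_left (hdiffy_le T) (sq_nonneg _)
    · exact mul_le_mul_of_nonneg_left (hdiffx_le T) (sq_nonneg _)
  have hrhs : C0 * ((T * Cψ) + (sA * (sigmaMin Ff)⁻¹)^2 * (T * Cε)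
       + (β⁻¹)^2 * (4 * B) + (α⁻¹ * sA * (sigmaMin Ff)⁻¹)^2 * (4 * B))
      = (4 * Cψ / sigmaMin Δ ^ 2 + 4 * sA ^ 2 * Cε / (sigmaMin Δ ^ 2 * sigmaMin Ff ^ 2)) / T
        + (4 * ((sigmaMin Δ)⁻¹)^2 * ((β⁻¹)^2 * (4 * B)
          + (α⁻¹ * sA * (sigmaMin Ff)⁻¹)^2 * (4 * B))) / (T:ℝ) ^ 2 := by
    rw [hC0]
    field_simp
    ring
  calc ∫ ω, ‖(T : ℝ)⁻¹ • (∑ t ∈ Finset.range T, y t ω) - yp‖ ^ 2 ∂μ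
      ≤ _ := hle
    _ = _ := hGval
    _ ≤ _ := hfinal
    _ = _ := hrhs



end TTSA
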